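/- In a closed process system over a finite type U with m transitions and k process instances, for every execution from a configuration c there exists an execution from c of length at most m * k * (Fintype.card U + 1) + Fintype.card U whose final configuration (both the position function and the database) equals the final configuration of the given execution. In particular, every database producible by some execution is producible by an execution of length at most m * k * (Fintype.card U + 1) + Fintype.card U. -/

import Mathlib

/-- A closed process system over a type `U` of facts. -/
structure ProcSys (U : Type) [DecidableEq U] where
  /-- places -/
  P : Type
  /-- transitions -/
  T : Type
  [finP : Fintype P]
  [finT : Fintype T]
  src : T → P
  tgt : T → P
  /-- number of process instances -/
  k : ℕ
  /-- enabling predicate -/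
  En : Fin k → T → Finset U → Prop
  /-- writing function -/
  Wr : Fin k → T → Finset U → Finset U

attribute [instance] ProcSys.finP ProcSys.finT

namespace ProcSys

variable {U : Type} [DecidableEq U]

/-- A configuration: positions of the instances together with a database. -/
abbrev Config (S : ProcSys U) : Type := (Fin S.k → S.P) × Finset U

/-- An allowed step by instance `i` via transition `t`. -/
def Step (S : ProcSys U) (i : Fin S.k) (t : S.T) (c c' : S.Config) : Prop :=
  c.1 i = S.src t ∧ S.En i t c.2 ∧
    c' = (Function.update c.1 i (S.tgt t), c.2 ∪ S.Wr i t c.2)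

/-- `f` (restricted to `0, …, n`) is an execution of length `n` from configuration `c`. -/
def IsExec (S : ProcSys U) (c : S.Config) (n : ℕ) (f : ℕ → S.Config) : Prop :=
  f 0 = c ∧ ∀ j < n, ∃ (i : Fin S.k) (t : S.T), S.Step i t (f j) (f (j + 1))

end ProcSys

namespace ProcSys

variable {U : Type} [DecidableEq U]

/-! ### Move-list machinery -/

abbrev Move (S : ProcSys U) : Type := Fin S.k × S.T

def Allowed (S : ProcSys U) (c : S.Config) (x : S.Move) : Prop :=
  c.1 x.1 = S.src x.2 ∧ S.En x.1 x.2 c.2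

def app (S : ProcSys U) (c : S.Config) (x : S.Move) : S.Config :=
  (Function.update c.1 x.1 (S.tgt x.2), c.2 ∪ S.Wr x.1 x.2 c.2)

def run (S : ProcSys U) (c : S.Config) (l : List S.Move) : S.Config := l.foldl S.app c

def Valid (S : ProcSys U) : S.Config → List S.Move → Prop
  | _, [] => True
  | c, x :: l => S.Allowed c x ∧ S.Valid (S.app c x) l

variable {S : ProcSys U}

@[simp] lemma run_nil (c : S.Config) : S.run c [] = c := rfl
@[simp] lemma run_cons (c : S.Config) (x : S.Move) (l : List S.Move) :
    S.run c (x :: l) = S.run (S.app c x) l := rfl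
@[simp] lemma run_append (c : S.Config) (l₁ l₂ : List S.Move) :
    S.run c (l₁ ++ l₂) = S.run (S.run c l₁) l₂ := List.foldl_append ..

@[simp] lemma valid_nil (c : S.Config) : S.Valid c [] := trivial
@[simp] lemma valid_cons (c : S.Config) (x : S.Move) (l : List S.Move) :
    S.Valid c (x :: l) ↔ S.Allowed c x ∧ S.Valid (S.app c x) l := Iff.rfl

lemma valid_append {c : S.Config} {l₁ l₂ : List S.Move} :
    S.Valid c (l₁ ++ l₂) ↔ S.Valid c l₁ ∧ S.Valid (S.run c l₁) l₂ := by
  induction l₁ generalizing c with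
  | nil => simp
  | cons x l ih => simp [ih, and_assoc]

lemma step_iff {i t} {c c' : S.Config} :
    S.Step i t c c' ↔ S.Allowed c (i, t) ∧ c' = S.app c (i, t) := by
  simp [Step, Allowed, app, and_assoc]

lemma subset_run (c : S.Config) (l : List S.Move) : c.2 ⊆ (S.run c l).2 := by
  induction l generalizing c with
  | nil => simp
  | cons x l ih => exact (Finset.subset_union_left).trans (ih (S.app c x))

/-- `D`-constancy along a run. -/
def DConst (S : ProcSys U) (c : S.Config) (l : List S.Move) : Prop := (S.run c l).2 = c.2

lemma dconst_append {c : S.Config} {l₁ l₂ : List S.Move} (h : S.DConst c (l₁ ++ l₂)) :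
    S.DConst c l₁ ∧ S.DConst (S.run c l₁) l₂ := by
  have h1 : c.2 ⊆ (S.run c l₁).2 := subset_run c l₁
  have h2 : (S.run c l₁).2 ⊆ (S.run c (l₁ ++ l₂)).2 := by
    rw [run_append]; exact subset_run _ _
  have e1 : (S.run c l₁).2 = c.2 := subset_antisymm (h ▸ h2) h1
  refine ⟨e1, ?_⟩
  unfold DConst at h ⊢
  rw [run_append] at h
  rw [h, e1]

lemma dconst_cons {c : S.Config} {x : S.Move} {l : List S.Move} (h : S.DConst c (x :: l)) :
    (S.app c x).2 = c.2 ∧ S.DConst (S.app c x) l := by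
  have := dconst_append (l₁ := [x]) (l₂ := l) (c := c) (by simpa using h)
  simpa [DConst] using this

/-- Swap two adjacent moves of distinct instances, assuming `D` is unchanged. -/
lemma swap_adjacent {c : S.Config} {x y : S.Move} (hne : x.1 ≠ y.1)
    (hax : S.Allowed c x) (hay : S.Allowed (S.app c x) y)
    (hD1 : (S.app c x).2 = c.2) (hD2 : (S.app (S.app c x) y).2 = (S.app c x).2) :
    S.Allowed c y ∧ S.Allowed (S.app c y) x ∧
      S.app (S.app c y) x = S.app (S.app c x) y := by
  have hWx : c.2 ∪ S.Wr x.1 x.2 c.2 = c.2 := hD1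
  have hWy : c.2 ∪ S.Wr y.1 y.2 c.2 = c.2 := by
    have : (S.app c x).2 ∪ S.Wr y.1 y.2 (S.app c x).2 = (S.app c x).2 := hD2
    rwa [hD1] at this
  have hcy2 : (S.app c y).2 = c.2 := hWy
  have hAy : S.Allowed c y := by
    refine ⟨?_, ?_⟩
    · have := hay.1
      rwa [show (S.app c x).1 y.1 = c.1 y.1 from Function.update_of_ne (Ne.symm hne) _ _] at this
    · have := hay.2
      rwa [hD1] at this
  have hAx : S.Allowed (S.app c y) x := by
    refine ⟨?_, ?_⟩
    · have : (S.app c y).1 x.1 = c.1 x.1 := Function.update_of_ne hne _ _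
      rw [this]; exact hax.1
    · rw [show (S.app c y).2 = c.2 from hcy2]; exact hax.2
  refine ⟨hAy, hAx, ?_⟩
  have e2 : (S.app (S.app c y) x).2 = (S.app (S.app c x) y).2 := by
    show (S.app c y).2 ∪ S.Wr x.1 x.2 (S.app c y).2 = _
    rw [hcy2, hWx, hD2, hD1]
  refine Prod.ext ?_ e2
  show Function.update (Function.update c.1 y.1 (S.tgt y.2)) x.1 (S.tgt x.2) = _
  exact (Function.update_comm hne _ _ _).symm

/-- Push a single move `x` to the right through a block `q` of moves of other instances. -/
lemma push_right {x : S.Move} :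
    ∀ (q : List S.Move) (r : List S.Move) (c : S.Config),
      S.Valid c (x :: q ++ r) → (∀ y ∈ q, y.1 ≠ x.1) → S.DConst c (x :: q) →
      S.Valid c (q ++ x :: r) ∧ S.run c (q ++ x :: r) = S.run c (x :: q ++ r)
  | [], r, c => by intro hv _ _; exact ⟨hv, rfl⟩
  | y :: q', r, c => by
    intro hv hq hD
    have hax : S.Allowed c x := hv.1
    have hay : S.Allowed (S.app c x) y := hv.2.1
    have hD' := dconst_cons hD
    have hD'' := dconst_cons hD'.2
    have hD1 : (S.app c x).2 = c.2 := hD'.1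
    have hD2 : (S.app (S.app c x) y).2 = (S.app c x).2 := by rw [hD''.1, hD1]
    obtain ⟨hAy, hAx, e⟩ := swap_adjacent (Ne.symm (hq y (by simp))) hax hay hD1 hD2
    have hv' : S.Valid (S.app c y) (x :: q' ++ r) := by
      refine ⟨hAx, ?_⟩
      rw [e]
      exact hv.2.2
    have hcy2 : (S.app c y).2 = c.2 := by
      have h2 : (S.app c x).2 ∪ S.Wr y.1 y.2 (S.app c x).2 = (S.app c x).2 := hD2
      rw [hD1] at h2
      exact h2
    have hDc : S.DConst (S.app c y) (x :: q') := by
      show (S.run (S.app (S.app c y) x) q').2 = _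
      rw [e, hD''.2, hD2, hD1, hcy2]
    obtain ⟨hv2, hr2⟩ := push_right q' r (S.app c y) hv' (fun z hz => hq z (by simp [hz])) hDc
    refine ⟨⟨hAy, hv2⟩, ?_⟩
    show S.run (S.app c y) (q' ++ x :: r) = S.run (S.app (S.app c x) y) (q' ++ r)
    rw [hr2]
    show S.run (S.app (S.app c y) x) (q' ++ r) = _
    rw [e]

/-- Sort a constant-`D` block: moves of instance `i` first, preserving relative orders. -/
lemma sort_filter (i : Fin S.k) :
    ∀ (l : List S.Move) (c : S.Config), S.Valid c l → S.DConst c l →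
      S.Valid c (l.filter (fun y => y.1 = i) ++ l.filter (fun y => ¬ y.1 = i)) ∧
      S.run c (l.filter (fun y => y.1 = i) ++ l.filter (fun y => ¬ y.1 = i)) = S.run c l
  | [], c => by intro _ _; simp
  | x :: xs, c => by
    intro hv hD
    obtain ⟨hDx, hD'⟩ := dconst_cons hD
    obtain ⟨hvS, hrS⟩ := sort_filter i xs (S.app c x) hv.2 hD'
    by_cases hx : x.1 = i
    · have hFG : (x :: xs).filter (fun y => y.1 = i) = x :: xs.filter (fun y => y.1 = i) ∧
          (x :: xs).filter (fun y => ¬ y.1 = i) = xs.filter (fun y => ¬ y.1 = i) := by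
        constructor <;> simp [List.filter_cons, hx]
      rw [hFG.1, hFG.2]
      exact ⟨⟨hv.1, hvS⟩, hrS⟩
    · have hFG : (x :: xs).filter (fun y => y.1 = i) = xs.filter (fun y => y.1 = i) ∧
          (x :: xs).filter (fun y => ¬ y.1 = i) = x :: xs.filter (fun y => ¬ y.1 = i) := by
        constructor <;> simp [List.filter_cons, hx]
      rw [hFG.1, hFG.2]
      have hvx : S.Valid c (x :: (xs.filter (fun y => y.1 = i) ++ xs.filter (fun y => ¬ y.1 = i))) :=
        ⟨hv.1, hvS⟩
      have hside : ∀ y ∈ xs.filter (fun y => y.1 = i), y.1 ≠ x.1 := by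
        intro y hy
        have : y.1 = i := by simpa using (List.of_mem_filter hy)
        rw [this]; exact fun h => hx h.symm
      have hDFG : S.DConst (S.app c x) (xs.filter (fun y => y.1 = i) ++ xs.filter (fun y => ¬ y.1 = i)) := by
        show (S.run (S.app c x) _).2 = _
        rw [hrS]; exact hD'
      have hDcx : S.DConst c (x :: xs.filter (fun y => y.1 = i)) := by
        show (S.run (S.app c x) (xs.filter (fun y => y.1 = i))).2 = c.2
        rw [(dconst_append hDFG).1, hDx]
      obtain ⟨hv2, hr2⟩ := push_right (x := x) (xs.filter (fun y => y.1 = i))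
        (xs.filter (fun y => ¬ y.1 = i)) c hvx hside hDcx
      refine ⟨hv2, ?_⟩
      rw [hr2]
      show S.run (S.app c x) (_ ++ _) = _
      rw [hrS]
      rfl

lemma run_pure (i : Fin S.k) :
    ∀ (q : List S.Move) (c : S.Config), (∀ y ∈ q, y.1 = i) →
      ∀ i', i' ≠ i → (S.run c q).1 i' = c.1 i'
  | [], c => by intro _ i' _; rfl
  | y :: q', c => by
    intro hq i' hi'
    have h1 := run_pure i q' (S.app c y) (fun z hz => hq z (by simp [hz])) i' hi'
    rw [run_cons, h1]
    exact Function.update_of_ne (by rw [hq y (by simp)]; exact hi') _ _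

lemma exists_dup_split {α : Type*} : ∀ {l : List α}, ¬ l.Nodup →
    ∃ (a : α) (l1 l2 l3 : List α), l = l1 ++ a :: (l2 ++ a :: l3)
  | [], h => absurd List.nodup_nil h
  | x :: xs, h => by
    rw [List.nodup_cons] at h
    by_cases hx : x ∈ xs
    · obtain ⟨s, t, rfl⟩ := List.append_of_mem hx
      exact ⟨x, [], s, t, rfl⟩
    · have hnd : ¬ xs.Nodup := by tauto
      obtain ⟨a, l1, l2, l3, rfl⟩ := exists_dup_split hnd
      exact ⟨a, x :: l1, l2, l3, rfl⟩

/-- Any constant-`D` execution can be shortened to length at most `|T| * k`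
with the same endpoints. -/
lemma constD_shorten : ∀ (N : ℕ) (l : List S.Move) (c : S.Config), l.length ≤ N →
    S.Valid c l → S.DConst c l →
    ∃ l', S.Valid c l' ∧ S.run c l' = S.run c l ∧ l'.length ≤ Fintype.card S.T * S.k := by
  intro N
  induction N with
  | zero =>
    intro l c hlen hv _
    exact ⟨l, hv, rfl, hlen.trans (Nat.zero_le _)⟩
  | succ N ih =>
    intro l c hlen hv hD
    by_cases hsmall : l.length ≤ Fintype.card S.T * S.k
    · exact ⟨l, hv, rfl, hsmall⟩
    · have hnd : ¬ l.Nodup := by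
        intro hnd
        have h1 := hnd.length_le_card
        rw [Fintype.card_prod, Fintype.card_fin] at h1
        have h2 := Nat.mul_comm S.k (Fintype.card S.T)
        omega
      obtain ⟨m, l1, l2, l3, rfl⟩ := exists_dup_split hnd
      have h0 : l1 ++ m :: (l2 ++ m :: l3) = l1 ++ m :: ((l2 ++ [m]) ++ l3) := by simp
      rw [h0] at hv hD hlen ⊢
      set i := m.1 with hi
      obtain ⟨hv1, hv2⟩ := valid_append.mp hv
      set c1 := S.run c l1 with hc1
      have hAm : S.Allowed c1 m := hv2.1
      set c2 := S.app c1 m with hc2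
      obtain ⟨hv4, hv5⟩ := valid_append.mp hv2.2
      obtain ⟨hDl1, hD2⟩ := dconst_append hD
      obtain ⟨hDm, hD3⟩ := dconst_cons hD2
      obtain ⟨hDw, hDl3⟩ := dconst_append hD3
      obtain ⟨hvS, hrS⟩ := sort_filter i (l2 ++ [m]) c2 hv4 hDw
      set F := (l2 ++ [m]).filter (fun y => y.1 = i) with hF
      set G := (l2 ++ [m]).filter (fun y => ¬ y.1 = i) with hG
      have hFdec : F = l2.filter (fun y => y.1 = i) ++ [m] := by
        rw [hF]; simp [List.filter_append, List.filter_cons]; exact hi.symm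
      have hGdec : G = l2.filter (fun y => ¬ y.1 = i) := by
        rw [hG]; simp [List.filter_append, List.filter_cons]; exact hi.symm
      -- the pure-`i` block returns to `c2`
      have hDFG : S.DConst c2 (F ++ G) := by
        show (S.run c2 (F ++ G)).2 = _
        rw [hrS]; exact hDw
      have hDF : S.DConst c2 F := (dconst_append hDFG).1
      have hrunF : S.run c2 F = c2 := by
        refine Prod.ext (funext fun i' => ?_) hDF
        by_cases hii : i' = i
        · have e1 : (S.run c2 F).1 m.1 = S.tgt m.2 := by
            rw [hFdec, run_append]
            exact Function.update_self _ _ _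
          have e2 : c2.1 m.1 = S.tgt m.2 := Function.update_self _ _ _
          rw [hii, hi, e1, e2]
        · exact run_pure i F c2 (fun y hy => by simpa using (List.of_mem_filter hy)) i' hii
      have hvG : S.Valid c2 G := by
        have := (valid_append.mp hvS).2
        rwa [hrunF] at this
      have hrG : S.run c2 G = S.run c2 (l2 ++ [m]) := by
        have : S.run c2 (F ++ G) = S.run c2 (l2 ++ [m]) := hrS
        rwa [run_append, hrunF] at this
      -- the shortened list
      have hvnew : S.Valid c (l1 ++ m :: (G ++ l3)) := by
        rw [valid_append]
        refine ⟨hv1, hAm, ?_⟩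
        rw [valid_append]
        exact ⟨hvG, by rw [hrG]; exact hv5⟩
      have hrnew : S.run c (l1 ++ m :: (G ++ l3)) = S.run c (l1 ++ m :: ((l2 ++ [m]) ++ l3)) := by
        have e1 : S.run c (l1 ++ m :: (G ++ l3)) = S.run (S.run c2 G) l3 := by
          rw [run_append, run_cons, run_append]
        have e2 : S.run c (l1 ++ m :: ((l2 ++ [m]) ++ l3)) = S.run (S.run c2 (l2 ++ [m])) l3 := by
          rw [run_append, run_cons, run_append]
        rw [e1, e2, hrG]
      have hDnew : S.DConst c (l1 ++ m :: (G ++ l3)) := by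
        show (S.run c _).2 = c.2
        rw [hrnew]; exact hD
      have hlnew : (l1 ++ m :: (G ++ l3)).length ≤ N := by
        have hGlen : G.length ≤ l2.length := by
          rw [hGdec]; exact List.length_filter_le _ _
        simp only [List.length_append, List.length_cons] at hlen ⊢
        omega
      obtain ⟨l', hv', hr', hlen'⟩ := ih _ c hlnew hvnew hDnew
      exact ⟨l', hv', by rw [hr', hrnew], hlen'⟩

/-- Split an execution at the first database change (if any). -/
lemma split_first : ∀ (l : List S.Move) (c : S.Config),
    S.DConst c l ∨ ∃ a x b, l = a ++ x :: b ∧ S.DConst c a ∧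
      (S.app (S.run c a) x).2 ≠ (S.run c a).2
  | [], c => Or.inl rfl
  | x :: xs, c => by
    by_cases h : (S.app c x).2 = c.2
    · rcases split_first xs (S.app c x) with hC | ⟨a, y, b, rfl, hDa, hne⟩
      · left
        show (S.run (S.app c x) xs).2 = c.2
        rw [hC, h]
      · right
        refine ⟨x :: a, y, b, rfl, ?_, ?_⟩
        · show (S.run (S.app c x) a).2 = c.2
          rw [hDa, h]
        · exact hne
    · exact Or.inr ⟨[], x, xs, rfl, rfl, h⟩

lemma valid_getElem : ∀ (l : List S.Move) (c : S.Config), S.Valid c l →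
    ∀ (j : ℕ) (h : j < l.length), S.Allowed (S.run c (l.take j)) l[j]
  | [], c => by intro _ j h; simp at h
  | x :: xs, c => by
    intro hv j h
    match j with
    | 0 => exact hv.1
    | j + 1 =>
      have := valid_getElem xs (S.app c x) hv.2 j (by simpa using h)
      simpa using this

lemma exec_to_moves {c : S.Config} {n : ℕ} {f : ℕ → S.Config} (hexec : S.IsExec c n f) :
    ∃ ms : List S.Move, S.Valid c ms ∧ ms.length = n ∧ S.run c ms = f n := by
  have key : ∀ j, j ≤ n → ∃ ms : List S.Move, S.Valid c ms ∧ ms.length = j ∧ S.run c ms = f j := by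
    intro j
    induction j with
    | zero => exact fun _ => ⟨[], trivial, rfl, hexec.1.symm ▸ rfl⟩
    | succ j ih =>
      intro hj
      obtain ⟨ms, hv, hlen, hr⟩ := ih (by omega)
      obtain ⟨i, t, hstep⟩ := hexec.2 j (by omega)
      rw [step_iff] at hstep
      refine ⟨ms ++ [(i, t)], ?_, by simp [hlen], ?_⟩
      · rw [valid_append, hr]
        exact ⟨hv, hstep.1, trivial⟩
      · rw [run_append, hr]
        exact hstep.2.symm
  exact key n le_rfl

lemma moves_to_exec {c : S.Config} {ms : List S.Move} (hv : S.Valid c ms) :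
    S.IsExec c ms.length (fun j => S.run c (ms.take j)) := by
  constructor
  · simp
  · intro j hj
    refine ⟨ms[j].1, ms[j].2, ?_⟩
    rw [step_iff]
    constructor
    · have := valid_getElem ms c hv j hj
      simpa using this
    · show S.run c (ms.take (j + 1)) = _
      rw [← List.take_concat_get hj, List.concat_eq_append, run_append]
      rfl

section MainBound

variable [Fintype U]

lemma main_bound : ∀ (N : ℕ) (c : S.Config) (l : List S.Move),
    Fintype.card U - c.2.card ≤ N → S.Valid c l →
    ∃ l', S.Valid c l' ∧ S.run c l' = S.run c l ∧
      l'.length ≤ Fintype.card S.T * S.k * ((Fintype.card U - c.2.card) + 1) +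
        (Fintype.card U - c.2.card) := by
  intro N
  induction N with
  | zero =>
    intro c l hN hv
    rcases split_first l c with hD | ⟨a, x, b, rfl, hDa, hne⟩
    · obtain ⟨l', hv', hr', hlen'⟩ := constD_shorten l.length l c le_rfl hv hD
      refine ⟨l', hv', hr', hlen'.trans ?_⟩
      have h1 : Fintype.card S.T * S.k ≤ Fintype.card S.T * S.k * ((Fintype.card U - c.2.card) + 1) :=
        Nat.le_mul_of_pos_right _ (by omega)
      omega
    · exfalso
      have h1 : (S.run c a).2 = c.2 := hDa
      have h2 : (S.run c a).2 ⊆ (S.app (S.run c a) x).2 := Finset.subset_union_left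
      have h3 : (S.run c a).2 ⊂ (S.app (S.run c a) x).2 := ⟨h2, fun hsub => hne (subset_antisymm hsub h2)⟩
      have h4 : (S.run c a).2.card < (S.app (S.run c a) x).2.card := Finset.card_lt_card h3
      have h5 : (S.app (S.run c a) x).2.card ≤ Fintype.card U :=
        le_trans (Finset.card_le_univ _) (le_of_eq Finset.card_univ)
      rw [h1] at h4
      omega
  | succ N ih =>
    intro c l hN hv
    rcases split_first l c with hD | ⟨a, x, b, rfl, hDa, hne⟩
    · obtain ⟨l', hv', hr', hlen'⟩ := constD_shorten l.length l c le_rfl hv hD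
      refine ⟨l', hv', hr', hlen'.trans ?_⟩
      have h1 : Fintype.card S.T * S.k ≤ Fintype.card S.T * S.k * ((Fintype.card U - c.2.card) + 1) :=
        Nat.le_mul_of_pos_right _ (by omega)
      omega
    · obtain ⟨hva, hvxb⟩ := valid_append.mp hv
      have hAx : S.Allowed (S.run c a) x := hvxb.1
      have hvb : S.Valid (S.app (S.run c a) x) b := hvxb.2
      have h1 : (S.run c a).2 = c.2 := hDa
      have h2 : (S.run c a).2 ⊆ (S.app (S.run c a) x).2 := Finset.subset_union_left
      have h3 : (S.run c a).2 ⊂ (S.app (S.run c a) x).2 := ⟨h2, fun hsub => hne (subset_antisymm hsub h2)⟩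
      have h4 : c.2.card < (S.app (S.run c a) x).2.card := by
        rw [← h1]; exact Finset.card_lt_card h3
      have h5 : (S.app (S.run c a) x).2.card ≤ Fintype.card U :=
        le_trans (Finset.card_le_univ _) (le_of_eq Finset.card_univ)
      obtain ⟨a', hva', hra', hlena'⟩ := constD_shorten a.length a c le_rfl hva hDa
      obtain ⟨b', hvb', hrb', hlenb'⟩ := ih (S.app (S.run c a) x) b (by omega) hvb
      refine ⟨a' ++ x :: b', ?_, ?_, ?_⟩
      · rw [valid_append, hra']
        exact ⟨hva', hAx, hvb'⟩
      · rw [run_append, run_cons, hra', hrb', run_append, run_cons]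
      · set X := Fintype.card U - c.2.card with hX
        set X2 := Fintype.card U - (S.app (S.run c a) x).2.card with hX2
        have hXX : X2 + 1 ≤ X := by omega
        have hmul : Fintype.card S.T * S.k * (X2 + 1) ≤ Fintype.card S.T * S.k * X :=
          Nat.mul_le_mul_left _ hXX
        have hexp : Fintype.card S.T * S.k * (X + 1) =
            Fintype.card S.T * S.k * X + Fintype.card S.T * S.k := by ring
        simp only [List.length_append, List.length_cons]
        omega

end MainBound

end ProcSys

/-- every execution can be replaced by one of length at most
`m * k * (Fintype.card U + 1) + Fintype.card U` with the same final configuration. -/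
theorem exec_bounded_length (U : Type) [Fintype U] [DecidableEq U]
    (S : ProcSys U) (c : S.Config) (n : ℕ) (f : ℕ → S.Config)
    (hexec : S.IsExec c n f) :
    ∃ (n' : ℕ) (f' : ℕ → S.Config),
      n' ≤ Fintype.card S.T * S.k * (Fintype.card U + 1) + Fintype.card U ∧
      S.IsExec c n' f' ∧ f' n' = f n := by
  obtain ⟨ms, hv, hlen, hr⟩ := ProcSys.exec_to_moves hexec
  obtain ⟨l', hv', hr', hlen'⟩ := ProcSys.main_bound (Fintype.card U - c.2.card) c ms le_rfl hv
  refine ⟨l'.length, fun j => S.run c (l'.take j), ?_, ProcSys.moves_to_exec hv', ?_⟩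
  · have h1 : Fintype.card U - c.2.card ≤ Fintype.card U := Nat.sub_le _ _
    have h2 : Fintype.card S.T * S.k * ((Fintype.card U - c.2.card) + 1) ≤
        Fintype.card S.T * S.k * (Fintype.card U + 1) := Nat.mul_le_mul_left _ (by omega)
    omega
  · show S.run c (l'.take l'.length) = f n
    rw [List.take_length, hr', hr]
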